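/- Let n ≥ 2, let X₁,…,Xₙ be i.i.d. random variables uniformly distributed on (0,1], and let Y = (max_i X_i − min_i X_i)/max_i X_i. Then for every integer r ≥ 0, E[Y^r] = (n−1)/(n+r−1), and the cumulative distribution function of Y satisfies P(Y ≤ z) = 0 for z ≤ 0, P(Y ≤ z) = z^{n−1} for 0 ≤ z ≤ 1, and P(Y ≤ z) = 1 for z ≥ 1. -/

import Mathlib

open MeasureTheory Set
open scoped ENNReal

section Aux
variable {m : ℕ}

noncomputable abbrev μn (n : ℕ) : Measure (Fin n → ℝ) :=
  Measure.pi fun _ : Fin n => volume.restrict (Set.Ioc (0:ℝ) 1)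

def box (n : ℕ) : Set (Fin n → ℝ) := {x | ∀ i, x i ∈ Set.Ioc (0:ℝ) 1}

instance probIoc : IsProbabilityMeasure (volume.restrict (Set.Ioc (0:ℝ) 1)) :=
  ⟨by simp⟩

instance probμn (n : ℕ) : IsProbabilityMeasure (μn n) := by
  infer_instance

lemma box_measurable (n : ℕ) : MeasurableSet (box n) := by
  have : box n = ⋂ i, (fun x : Fin n → ℝ => x i) ⁻¹' (Set.Ioc 0 1) := by
    ext x; simp [box]
  rw [this]
  exact MeasurableSet.iInter fun i => (measurable_pi_apply i) measurableSet_Ioc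

lemma μn_box (n : ℕ) : μn n (box n) = 1 := by
  have : box n = Set.pi Set.univ (fun _ : Fin n => Set.Ioc (0:ℝ) 1) := by
    ext x; simp [box, Set.mem_pi]
  rw [this, Measure.pi_pi]
  simp

lemma ae_box (n : ℕ) : ∀ᵐ x ∂(μn n), x ∈ box n := by
  rw [ae_iff]
  have h1 : μn n (box n)ᶜ = 1 - μn n (box n) := by
    rw [measure_compl (box_measurable n) (measure_ne_top _ _)]
    simp
  exact (by simpa [μn_box n] using h1 : μn n (box n)ᶜ = 0)

end Aux

section SupInf
variable {n : ℕ} (hne : (Finset.univ : Finset (Fin n)).Nonempty)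

lemma sup'_pos {x : Fin n → ℝ} (hx : ∀ i, x i ∈ Set.Ioc (0:ℝ) 1) :
    0 < Finset.univ.sup' hne x := by
  obtain ⟨i, _, hi⟩ := Finset.exists_mem_eq_sup' hne x
  rw [hi]; exact (hx i).1

lemma sup'_le_one {x : Fin n → ℝ} (hx : ∀ i, x i ∈ Set.Ioc (0:ℝ) 1) :
    Finset.univ.sup' hne x ≤ 1 :=
  Finset.sup'_le _ _ fun i _ => (hx i).2

lemma inf'_pos {x : Fin n → ℝ} (hx : ∀ i, x i ∈ Set.Ioc (0:ℝ) 1) :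
    0 < Finset.univ.inf' hne x :=
  (Finset.lt_inf'_iff _).2 fun i _ => (hx i).1

lemma inf'_le_sup' (x : Fin n → ℝ) :
    Finset.univ.inf' hne x ≤ Finset.univ.sup' hne x := by
  obtain ⟨i, _, hi⟩ := Finset.exists_mem_eq_sup' hne x
  rw [hi]
  exact Finset.inf'_le _ (Finset.mem_univ i)

lemma Yf_le_iff {x : Fin n → ℝ} (hx : ∀ i, x i ∈ Set.Ioc (0:ℝ) 1) (z : ℝ) :
    (Finset.univ.sup' hne x - Finset.univ.inf' hne x) / Finset.univ.sup' hne x ≤ z ↔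
      (1 - z) * Finset.univ.sup' hne x ≤ Finset.univ.inf' hne x := by
  rw [div_le_iff₀ (sup'_pos hne hx)]
  constructor <;> intro h <;> nlinarith

lemma Yf_nonneg {x : Fin n → ℝ} (hx : ∀ i, x i ∈ Set.Ioc (0:ℝ) 1) :
    0 ≤ (Finset.univ.sup' hne x - Finset.univ.inf' hne x) / Finset.univ.sup' hne x :=
  div_nonneg (by linarith [inf'_le_sup' hne x]) (sup'_pos hne hx).le

lemma Yf_lt_one {x : Fin n → ℝ} (hx : ∀ i, x i ∈ Set.Ioc (0:ℝ) 1) :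
    (Finset.univ.sup' hne x - Finset.univ.inf' hne x) / Finset.univ.sup' hne x < 1 := by
  rw [div_lt_one (sup'_pos hne hx)]
  linarith [inf'_pos hne hx]

lemma measurable_Yf : Measurable (fun x : Fin n → ℝ =>
    (Finset.univ.sup' hne x - Finset.univ.inf' hne x) / Finset.univ.sup' hne x) := by
  have hM : Measurable (fun x : Fin n → ℝ => Finset.univ.sup' hne x) := by
    have := Finset.measurable_sup' hne (f := fun i (x : Fin n → ℝ) => x i)
      (fun i _ => measurable_pi_apply i)
    convert this using 1
    ext x
    simp [Finset.sup'_apply]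
  have hm : Measurable (fun x : Fin n → ℝ => Finset.univ.inf' hne x) := by
    have : Measurable (Finset.univ.inf' hne (fun i (x : Fin n → ℝ) => x i)) :=
      Finset.inf'_induction hne _ (fun _f hf _g hg => hf.inf hg)
        (fun i _ => measurable_pi_apply i)
    convert this using 1
    ext x
    simp [Finset.inf'_apply]
  exact (hM.sub hm).div hM

end SupInf

section Csets
variable {m : ℕ}

def K (i j : Fin (m+1)) (z s : ℝ) : Set ℝ :=
  if j < i then Set.Ico ((1-z)*s) s else Set.Icc ((1-z)*s) s

def C (i : Fin (m+1)) (z : ℝ) : Set (Fin (m+1) → ℝ) :=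
  {x | x i ∈ Set.Ioc (0:ℝ) 1 ∧ ∀ j, j ≠ i → x j ∈ K i j z (x i)}

lemma measurableSet_C (i : Fin (m+1)) (z : ℝ) : MeasurableSet (C i z) := by
  have h1 : MeasurableSet {x : Fin (m+1) → ℝ | x i ∈ Set.Ioc (0:ℝ) 1} :=
    (measurable_pi_apply i) measurableSet_Ioc
  have h2 : ∀ j : Fin (m+1), MeasurableSet {x : Fin (m+1) → ℝ | x j ∈ K i j z (x i)} := by
    intro j
    unfold K
    split_ifs
    · exact MeasurableSet.inter
        (measurableSet_le (measurable_const.mul (measurable_pi_apply i)) (measurable_pi_apply j))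
        (measurableSet_lt (measurable_pi_apply j) (measurable_pi_apply i))
    · exact MeasurableSet.inter
        (measurableSet_le (measurable_const.mul (measurable_pi_apply i)) (measurable_pi_apply j))
        (measurableSet_le (measurable_pi_apply j) (measurable_pi_apply i))
  have : C i z = {x : Fin (m+1) → ℝ | x i ∈ Set.Ioc (0:ℝ) 1} ∩
      ⋂ j, ⋂ (_ : j ≠ i), {x : Fin (m+1) → ℝ | x j ∈ K i j z (x i)} := by
    ext x; simp [C]
  rw [this]
  exact h1.inter (MeasurableSet.iInter fun j => MeasurableSet.iInter fun _ => h2 j)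

lemma C_subset_box {i : Fin (m+1)} {z : ℝ} (hz0 : 0 ≤ z) (hz1 : z < 1) {x : Fin (m+1) → ℝ}
    (hx : x ∈ C i z) : ∀ j, x j ∈ Set.Ioc (0:ℝ) 1 := by
  obtain ⟨hi, hj⟩ := hx
  intro j
  by_cases hji : j = i
  · subst hji; exact hi
  · have hK := hj j hji
    unfold K at hK
    have h1 : 0 < (1-z) * x i := mul_pos (by linarith) hi.1
    split_ifs at hK
    · exact ⟨lt_of_lt_of_le h1 hK.1, le_trans hK.2.le hi.2⟩
    · exact ⟨lt_of_lt_of_le h1 hK.1, le_trans hK.2 hi.2⟩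

lemma C_cover (hne : (Finset.univ : Finset (Fin (m+1))).Nonempty) {z : ℝ}
    (hz0 : 0 ≤ z) (hz1 : z < 1) :
    {x : Fin (m+1) → ℝ |
        (Finset.univ.sup' hne x - Finset.univ.inf' hne x) / Finset.univ.sup' hne x ≤ z} ∩
      box (m+1) = ⋃ i, C i z := by
  ext x
  simp only [Set.mem_inter_iff, Set.mem_setOf_eq, Set.mem_iUnion]
  constructor
  · rintro ⟨hY, hbox⟩
    have hbox' : ∀ j, x j ∈ Set.Ioc (0:ℝ) 1 := hbox
    rw [Yf_le_iff hne hbox'] at hY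
    -- least argmax
    set M := Finset.univ.sup' hne x with hM
    have hex : (Finset.univ.filter (fun j => x j = M)).Nonempty := by
      obtain ⟨i, _, hi⟩ := Finset.exists_mem_eq_sup' hne x
      exact ⟨i, by simp [hi.symm, hM]⟩
    set i := (Finset.univ.filter (fun j => x j = M)).min' hex with hidef
    have hxi : x i = M := by
      have := (Finset.univ.filter (fun j => x j = M)).min'_mem hex
      simpa using this
    refine ⟨i, by rw [hxi]; exact ⟨sup'_pos hne hbox', sup'_le_one hne hbox'⟩, ?_⟩
    intro j hj
    have hle : x j ≤ x i := by rw [hxi]; exact Finset.le_sup' x (Finset.mem_univ j)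
    have hge : (1-z) * x i ≤ x j := by
      rw [hxi]
      exact le_trans hY (Finset.inf'_le _ (Finset.mem_univ j))
    unfold K
    split_ifs with hlt
    · refine ⟨hge, lt_of_le_of_ne hle ?_⟩
      intro hEq
      have : i ≤ j := Finset.min'_le _ j (by simp only [Finset.mem_filter, Finset.mem_univ, true_and]; rw [hEq, hxi])
      exact absurd hlt (not_lt.2 this)
    · exact ⟨hge, hle⟩
  · rintro ⟨i, hi⟩
    have hbox' : ∀ j, x j ∈ Set.Ioc (0:ℝ) 1 := C_subset_box hz0 hz1 hi
    refine ⟨?_, hbox'⟩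
    rw [Yf_le_iff hne hbox']
    obtain ⟨hImem, hj⟩ := hi
    have hsup : Finset.univ.sup' hne x = x i := by
      apply le_antisymm
      · apply Finset.sup'_le
        intro j _
        by_cases hji : j = i
        · subst hji; exact le_refl _
        · have hK := hj j hji
          unfold K at hK
          split_ifs at hK
          · exact hK.2.le
          · exact hK.2
      · exact Finset.le_sup' x (Finset.mem_univ i)
    rw [hsup]
    apply Finset.le_inf'
    intro j _
    by_cases hji : j = i
    · subst hji
      nlinarith [hImem.1]
    · have hK := hj j hji
      unfold K at hK
      split_ifs at hK
      · exact hK.1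
      · exact hK.1

lemma C_disjoint (z : ℝ) : Pairwise (Function.onFun Disjoint (fun i : Fin (m+1) => C i z)) := by
  intro i k hik
  rw [Function.onFun, Set.disjoint_left]
  rintro x ⟨hxi1, hxi2⟩ ⟨hxk1, hxk2⟩
  rcases lt_or_gt_of_ne hik with h | h
  · have h1 := hxi2 k (ne_of_gt h)
    have h2 := hxk2 i hik
    unfold K at h1 h2
    rw [if_neg (not_lt.2 h.le)] at h1
    rw [if_pos h] at h2
    have := h2.2
    have := h1.2
    have hxi_pos := hxi1.1
    nlinarith [hxk1.1]
  · have h1 := hxi2 k (ne_of_lt h)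
    have h2 := hxk2 i (ne_of_gt h)
    unfold K at h1 h2
    rw [if_pos h] at h1
    rw [if_neg (not_lt.2 h.le)] at h2
    nlinarith [h1.2, h2.2]
end Csets

section Meas

lemma measurableSet_K {m : ℕ} (i j : Fin (m+1)) (z s : ℝ) : MeasurableSet (K i j z s) := by
  unfold K; split_ifs
  exacts [measurableSet_Ico, measurableSet_Icc]

lemma volume_restrict_K {m : ℕ} (i j : Fin (m+1)) {z s : ℝ} (hz0 : 0 ≤ z) (hz1 : z < 1)
    (hs : s ∈ Set.Ioc (0:ℝ) 1) :
    (volume.restrict (Set.Ioc (0:ℝ) 1)) (K i j z s) = ENNReal.ofReal (z * s) := by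
  have hsub : K i j z s ⊆ Set.Ioc (0:ℝ) 1 := by
    intro y hy
    have h1 : 0 < (1-z) * s := mul_pos (by linarith) hs.1
    unfold K at hy
    split_ifs at hy
    · exact ⟨lt_of_lt_of_le h1 hy.1, le_trans hy.2.le hs.2⟩
    · exact ⟨lt_of_lt_of_le h1 hy.1, le_trans hy.2 hs.2⟩
  rw [Measure.restrict_apply (measurableSet_K i j z s), Set.inter_eq_left.2 hsub]
  have harith : s - (1-z)*s = z * s := by ring
  unfold K; split_ifs
  · rw [Real.volume_Ico, harith]
  · rw [Real.volume_Icc, harith]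


lemma lint_pow (k : ℕ) :
    ∫⁻ s in Set.Ioc (0:ℝ) 1, ENNReal.ofReal (s ^ k) = ENNReal.ofReal (1/(k+1)) := by
  rw [← MeasureTheory.ofReal_integral_eq_lintegral_ofReal]
  · congr 1
    rw [← intervalIntegral.integral_of_le zero_le_one, integral_pow]
    simp
  · exact (continuous_pow k).integrableOn_Ioc
  · filter_upwards [ae_restrict_mem measurableSet_Ioc] with s hs
    exact pow_nonneg hs.1.le k

lemma measure_C {m : ℕ} (i : Fin (m+1)) {z : ℝ} (hz0 : 0 ≤ z) (hz1 : z < 1) :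
    μn (m+1) (C i z) = ENNReal.ofReal (z ^ m) * ENNReal.ofReal (1/(m+1)) := by
  set e := MeasurableEquiv.piFinSuccAbove (fun _ : Fin (m+1) => ℝ) i with he
  have mp := measurePreserving_piFinSuccAbove
    (fun _ : Fin (m+1) => volume.restrict (Set.Ioc (0:ℝ) 1)) i
  set D : Set (ℝ × (Fin m → ℝ)) :=
    {p | p.1 ∈ Set.Ioc (0:ℝ) 1 ∧ ∀ j, p.2 j ∈ K i (i.succAbove j) z p.1} with hD
  have hDmeas : MeasurableSet D := by
    have h1 : MeasurableSet {p : ℝ × (Fin m → ℝ) | p.1 ∈ Set.Ioc (0:ℝ) 1} :=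
      measurable_fst measurableSet_Ioc
    have h2 : ∀ j : Fin m, MeasurableSet {p : ℝ × (Fin m → ℝ) | p.2 j ∈ K i (i.succAbove j) z p.1} := by
      intro j
      have hmj : Measurable (fun p : ℝ × (Fin m → ℝ) => p.2 j) :=
        (measurable_pi_apply j).comp measurable_snd
      unfold K; split_ifs
      · exact MeasurableSet.inter
          (measurableSet_le (measurable_const.mul measurable_fst) hmj)
          (measurableSet_lt hmj measurable_fst)
      · exact MeasurableSet.inter
          (measurableSet_le (measurable_const.mul measurable_fst) hmj)
          (measurableSet_le hmj measurable_fst)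
    have : D = {p : ℝ × (Fin m → ℝ) | p.1 ∈ Set.Ioc (0:ℝ) 1} ∩
        ⋂ j, {p : ℝ × (Fin m → ℝ) | p.2 j ∈ K i (i.succAbove j) z p.1} := by
      ext p; simp [hD]
    rw [this]
    exact h1.inter (MeasurableSet.iInter h2)
  have hpre : C i z = e ⁻¹' D := by
    ext x
    have hex : e x = (x i, fun j => x (i.succAbove j)) := by
      simp [he, MeasurableEquiv.piFinSuccAbove_apply, Fin.insertNthEquiv]
      rfl
    simp only [Set.mem_preimage, hex, hD, Set.mem_setOf_eq, C]
    constructor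
    · rintro ⟨h1, h2⟩
      exact ⟨h1, fun j => h2 _ (Fin.succAbove_ne i j)⟩
    · rintro ⟨h1, h2⟩
      refine ⟨h1, fun j hj => ?_⟩
      obtain ⟨k, rfl⟩ := Fin.exists_succAbove_eq hj
      exact h2 k
  rw [hpre, mp.measure_preimage hDmeas.nullMeasurableSet]
  rw [Measure.prod_apply hDmeas]
  have hfib : ∀ s ∈ Set.Ioc (0:ℝ) 1,
      (Measure.pi fun _ : Fin m => volume.restrict (Set.Ioc (0:ℝ) 1))
        (Prod.mk s ⁻¹' D) = ENNReal.ofReal (z^m) * ENNReal.ofReal (s^m) := by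
    intro s hs
    have : Prod.mk s ⁻¹' D = Set.pi Set.univ (fun j : Fin m => K i (i.succAbove j) z s) := by
      ext y; simp [hD, Set.mem_pi, hs.1, hs.2]
    rw [this, Measure.pi_pi]
    have : ∀ j : Fin m, (volume.restrict (Set.Ioc (0:ℝ) 1)) (K i (i.succAbove j) z s)
        = ENNReal.ofReal (z * s) := fun j => volume_restrict_K i _ hz0 hz1 hs
    simp only [this, Finset.prod_const, Finset.card_univ, Fintype.card_fin]
    rw [← ENNReal.ofReal_pow (mul_nonneg hz0 hs.1.le), mul_pow,
      ENNReal.ofReal_mul (pow_nonneg hz0 m)]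
  calc ∫⁻ s, (Measure.pi fun _ : Fin m => volume.restrict (Set.Ioc (0:ℝ) 1))
        (Prod.mk s ⁻¹' D) ∂(volume.restrict (Set.Ioc (0:ℝ) 1))
      = ∫⁻ s in Set.Ioc (0:ℝ) 1, ENNReal.ofReal (z^m) * ENNReal.ofReal (s^m) ∂volume := by
        refine setLIntegral_congr_fun measurableSet_Ioc ?_
        exact hfib
    _ = ENNReal.ofReal (z^m) * ∫⁻ s in Set.Ioc (0:ℝ) 1, ENNReal.ofReal (s^m) ∂volume := by
        rw [lintegral_const_mul]
        exact ENNReal.measurable_ofReal.comp (measurable_id.pow_const m)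
    _ = ENNReal.ofReal (z^m) * ENNReal.ofReal (1/(m+1)) := by rw [lint_pow]

end Meas

section CDF
variable {n : ℕ}

lemma measure_eq_inter_box (S : Set (Fin n → ℝ)) : μn n S = μn n (S ∩ box n) := by
  refine le_antisymm ?_ (measure_mono Set.inter_subset_left)
  calc μn n S ≤ μn n ((S ∩ box n) ∪ (box n)ᶜ) := by
        apply measure_mono
        intro x hx
        by_cases hb : x ∈ box n
        · exact Or.inl ⟨hx, hb⟩
        · exact Or.inr hb
    _ ≤ μn n (S ∩ box n) + μn n (box n)ᶜ := measure_union_le _ _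
    _ = μn n (S ∩ box n) := by
        have : μn n (box n)ᶜ = 0 := by
          rw [measure_compl (box_measurable n) (measure_ne_top _ _), μn_box]
          simp
        rw [this, add_zero]

lemma cdf_ennreal {m : ℕ} (hm : 1 ≤ m)
    (hne : (Finset.univ : Finset (Fin (m+1))).Nonempty) (z : ℝ) :
    μn (m+1) {x : Fin (m+1) → ℝ |
        (Finset.univ.sup' hne x - Finset.univ.inf' hne x) / Finset.univ.sup' hne x ≤ z}
      = ENNReal.ofReal ((min (max z 0) 1) ^ m) := by
  set S := {x : Fin (m+1) → ℝ |
    (Finset.univ.sup' hne x - Finset.univ.inf' hne x) / Finset.univ.sup' hne x ≤ z} with hS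
  rcases lt_or_ge z 0 with hz | hz0
  · have hempty : S ∩ box (m+1) = ∅ := by
      ext x
      simp only [Set.mem_inter_iff, Set.mem_empty_iff_false, iff_false, not_and, hS,
        Set.mem_setOf_eq]
      intro hY hb
      exact absurd (le_trans (Yf_nonneg hne hb) hY) (not_le.2 hz)
    rw [measure_eq_inter_box, hempty]
    have : min (max z 0) 1 = 0 := by
      rw [max_eq_right hz.le, min_eq_left zero_le_one]
    rw [this, zero_pow (by omega), ENNReal.ofReal_zero, measure_empty]
  rcases lt_or_ge z 1 with hz1 | hz1
  · rw [measure_eq_inter_box, hS, C_cover hne hz0 hz1,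
      measure_iUnion (C_disjoint z) (fun i => measurableSet_C i z), tsum_fintype]
    simp only [measure_C _ hz0 hz1, Finset.sum_const, Finset.card_univ, Fintype.card_fin,
      nsmul_eq_mul]
    rw [← mul_assoc, mul_comm ((m+1 : ℕ) : ℝ≥0∞), mul_assoc]
    have : ((m+1 : ℕ) : ℝ≥0∞) * ENNReal.ofReal (1/(m+1)) = 1 := by
      rw [← ENNReal.ofReal_natCast, ← ENNReal.ofReal_mul (Nat.cast_nonneg _)]
      rw [show ((m+1 : ℕ) : ℝ) * (1/(m+1)) = 1 by
        push_cast
        field_simp]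
      exact ENNReal.ofReal_one
    rw [this, mul_one]
    congr 2
    rw [max_eq_left hz0, min_eq_left hz1.le]
  · have hsub : box (m+1) ⊆ S := by
      intro x hb
      exact le_trans (Yf_lt_one hne hb).le hz1
    have h1 : (1:ℝ≥0∞) ≤ μn (m+1) S := by
      rw [← μn_box (m+1)]
      exact measure_mono hsub
    have h2 : μn (m+1) S ≤ 1 := prob_le_one
    have : min (max z 0) 1 = 1 := by
      rw [min_eq_right]
      exact le_max_of_le_left hz1
    rw [this, one_pow, ENNReal.ofReal_one]
    exact le_antisymm h2 h1
end CDF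

lemma lint_c (k : ℕ) (c : ℝ) :
    ∫⁻ y in Set.Ioc (0:ℝ) c, ENNReal.ofReal (y ^ k)
      = ENNReal.ofReal ((max c 0) ^ (k+1) / (k+1)) := by
  rcases le_or_gt c 0 with hc | hc
  · rw [Set.Ioc_eq_empty (by exact fun h => absurd (lt_of_lt_of_le h hc) (lt_irrefl 0)),
      max_eq_right hc]
    simp [zero_pow (Nat.succ_ne_zero k)]
  · rw [← MeasureTheory.ofReal_integral_eq_lintegral_ofReal]
    · rw [max_eq_left hc.le]
      congr 1
      rw [← intervalIntegral.integral_of_le hc.le, integral_pow]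
      simp
    · exact (continuous_pow k).integrableOn_Ioc
    · filter_upwards [ae_restrict_mem measurableSet_Ioc] with s hs
      exact pow_nonneg hs.1.le k

lemma minmax_eq (z : ℝ) : max (min 1 z) 0 = min (max z 0) 1 := by
  rcases le_total z 0 with h | h <;> rcases le_total z 1 with h1 | h1 <;>
    simp [min_def, max_def] <;> split_ifs <;> linarith

section Moments
variable {m : ℕ}

noncomputable def ρm (m : ℕ) : Measure ℝ :=
  (volume.restrict (Set.Ioc (0:ℝ) 1)).withDensity
    (fun y => ENNReal.ofReal ((m:ℝ) * y ^ (m-1)))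

lemma ρm_Iic (hm : 1 ≤ m) (z : ℝ) :
    ρm m (Set.Iic z) = ENNReal.ofReal ((min (max z 0) 1) ^ m) := by
  rw [ρm, withDensity_apply _ measurableSet_Iic,
    Measure.restrict_restrict measurableSet_Iic]
  have hset : Set.Iic z ∩ Set.Ioc (0:ℝ) 1 = Set.Ioc 0 (min 1 z) := by
    rw [Set.inter_comm, Set.Ioc_inter_Iic]
  rw [hset]
  have hmeas : Measurable (fun y : ℝ => ENNReal.ofReal (y ^ (m-1))) :=
    (measurable_id.pow_const _).ennreal_ofReal
  have hpull : ∫⁻ y in Set.Ioc (0:ℝ) (min 1 z), ENNReal.ofReal ((m:ℝ) * y ^ (m-1))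
      = ENNReal.ofReal (m:ℝ) * ∫⁻ y in Set.Ioc (0:ℝ) (min 1 z), ENNReal.ofReal (y ^ (m-1)) := by
    rw [← lintegral_const_mul (ENNReal.ofReal (m:ℝ)) hmeas]
    refine setLIntegral_congr_fun measurableSet_Ioc (fun y hy => ?_)
    rw [ENNReal.ofReal_mul (Nat.cast_nonneg m)]
  rw [hpull, lint_c, ← ENNReal.ofReal_mul (Nat.cast_nonneg m)]
  congr 1
  have hmm : m - 1 + 1 = m := Nat.succ_pred_eq_of_pos hm
  rw [hmm, minmax_eq]
  have hm0 : ((m:ℝ)) ≠ 0 := Nat.cast_ne_zero.2 (by omega)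
  field_simp
  rw [← Nat.cast_add_one, hmm]; ring

section Map
variable {m : ℕ}

lemma map_Yf (hm : 1 ≤ m) (hne : (Finset.univ : Finset (Fin (m+1))).Nonempty) :
    (μn (m+1)).map (fun x : Fin (m+1) → ℝ =>
        (Finset.univ.sup' hne x - Finset.univ.inf' hne x) / Finset.univ.sup' hne x)
      = ρm m := by
  have hY := measurable_Yf hne
  have hprob : IsProbabilityMeasure ((μn (m+1)).map (fun x : Fin (m+1) → ℝ =>
      (Finset.univ.sup' hne x - Finset.univ.inf' hne x) / Finset.univ.sup' hne x)) :=
    Measure.isProbabilityMeasure_map hY.aemeasurable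
  refine Measure.ext_of_Iic _ _ (fun a => ?_)
  rw [Measure.map_apply hY measurableSet_Iic, ρm_Iic hm]
  exact cdf_ennreal hm hne a

lemma moment (hm : 1 ≤ m) (hne : (Finset.univ : Finset (Fin (m+1))).Nonempty) (r : ℕ) :
    ∫ x : Fin (m+1) → ℝ,
        ((Finset.univ.sup' hne x - Finset.univ.inf' hne x) / Finset.univ.sup' hne x) ^ r
        ∂(μn (m+1))
      = (m:ℝ) / ((m:ℝ) + (r:ℝ)) := by
  have hY := measurable_Yf hne
  have hgmeas : Measurable (fun y : ℝ => ENNReal.ofReal (y ^ r)) :=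
    (measurable_id.pow_const _).ennreal_ofReal
  rw [integral_eq_lintegral_of_nonneg_ae ?pos ?meas]
  case pos =>
    filter_upwards [ae_box (m+1)] with x hx
    exact pow_nonneg (Yf_nonneg hne hx) r
  case meas => exact (hY.pow_const r).aestronglyMeasurable
  have h1 : ∫⁻ x, ENNReal.ofReal
        (((Finset.univ.sup' hne x - Finset.univ.inf' hne x) / Finset.univ.sup' hne x) ^ r)
        ∂(μn (m+1))
      = ∫⁻ y, ENNReal.ofReal (y ^ r) ∂((μn (m+1)).map (fun x : Fin (m+1) → ℝ =>
          (Finset.univ.sup' hne x - Finset.univ.inf' hne x) / Finset.univ.sup' hne x)) :=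
    (lintegral_map hgmeas hY).symm
  rw [h1, map_Yf hm hne, ρm]
  have hfmeas : Measurable (fun y : ℝ => ENNReal.ofReal ((m:ℝ) * y ^ (m-1))) :=
    ((measurable_id.pow_const (m-1)).const_mul (m:ℝ)).ennreal_ofReal
  rw [lintegral_withDensity_eq_lintegral_mul _ hfmeas hgmeas]
  simp only [Pi.mul_apply]
  have h2 : ∫⁻ y in Set.Ioc (0:ℝ) 1,
        ENNReal.ofReal ((m:ℝ) * y ^ (m-1)) * ENNReal.ofReal (y ^ r)
      = ENNReal.ofReal (m:ℝ) * ∫⁻ y in Set.Ioc (0:ℝ) 1, ENNReal.ofReal (y ^ (m-1+r)) := by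
    have hmeas' : Measurable (fun y : ℝ => ENNReal.ofReal (y ^ (m-1+r))) :=
      (measurable_id.pow_const (m-1+r)).ennreal_ofReal
    rw [← lintegral_const_mul (ENNReal.ofReal (m:ℝ)) hmeas']
    refine setLIntegral_congr_fun measurableSet_Ioc (fun y hy => ?_)
    rw [← ENNReal.ofReal_mul (mul_nonneg (Nat.cast_nonneg m) (pow_nonneg hy.1.le _)),
      mul_assoc, ← pow_add, ENNReal.ofReal_mul (Nat.cast_nonneg m)]
  rw [h2, lint_pow]
  rw [← ENNReal.ofReal_mul (Nat.cast_nonneg m), ENNReal.toReal_ofReal (by positivity)]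
  have : (m:ℝ) - 1 + ((r:ℝ)+1) = (m:ℝ) + r := by ring
  have hcast : ((m-1+r : ℕ) : ℝ) + 1 = (m:ℝ) + r := by
    have : (m - 1 + r) + 1 = m + r := by omega
    rw [← Nat.cast_add_one, this]
    push_cast; ring
  rw [hcast]
  rw [mul_one_div]
end Map

/-- For `X₁,…,Xₙ` (`n ≥ 2`) i.i.d. uniform on `(0,1]` and
`Y = (max_i X_i − min_i X_i)/max_i X_i`: for every integer `r ≥ 0`,
`E[Yʳ] = (n−1)/(n+r−1)`, and the c.d.f. of `Y` is `0` for `z ≤ 0`, `z^{n−1}` for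
`0 ≤ z ≤ 1`, and `1` for `z ≥ 1`. -/
theorem moments_and_cdf_relative_range (n : ℕ) (hn : 2 ≤ n) :
    (∀ r : ℕ,
        (∫ x : Fin n → ℝ,
            ((Finset.univ.sup' ⟨⟨0, by omega⟩, Finset.mem_univ _⟩ x -
                  Finset.univ.inf' ⟨⟨0, by omega⟩, Finset.mem_univ _⟩ x) /
                Finset.univ.sup' ⟨⟨0, by omega⟩, Finset.mem_univ _⟩ x) ^ r
            ∂(Measure.pi fun _ : Fin n => volume.restrict (Set.Ioc (0 : ℝ) 1)))
          = ((n : ℝ) - 1) / ((n : ℝ) + (r : ℝ) - 1)) ∧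
      (∀ z : ℝ, z ≤ 0 →
        ((Measure.pi fun _ : Fin n => volume.restrict (Set.Ioc (0 : ℝ) 1))
            {x : Fin n → ℝ |
              (Finset.univ.sup' ⟨⟨0, by omega⟩, Finset.mem_univ _⟩ x -
                  Finset.univ.inf' ⟨⟨0, by omega⟩, Finset.mem_univ _⟩ x) /
                Finset.univ.sup' ⟨⟨0, by omega⟩, Finset.mem_univ _⟩ x ≤ z}).toReal = 0) ∧
      (∀ z : ℝ, 0 ≤ z → z ≤ 1 →
        ((Measure.pi fun _ : Fin n => volume.restrict (Set.Ioc (0 : ℝ) 1))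
            {x : Fin n → ℝ |
              (Finset.univ.sup' ⟨⟨0, by omega⟩, Finset.mem_univ _⟩ x -
                  Finset.univ.inf' ⟨⟨0, by omega⟩, Finset.mem_univ _⟩ x) /
                Finset.univ.sup' ⟨⟨0, by omega⟩, Finset.mem_univ _⟩ x ≤ z}).toReal
          = z ^ (n - 1)) ∧
      (∀ z : ℝ, 1 ≤ z →
        ((Measure.pi fun _ : Fin n => volume.restrict (Set.Ioc (0 : ℝ) 1))
            {x : Fin n → ℝ |
              (Finset.univ.sup' ⟨⟨0, by omega⟩, Finset.mem_univ _⟩ x -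
                  Finset.univ.inf' ⟨⟨0, by omega⟩, Finset.mem_univ _⟩ x) /
                Finset.univ.sup' ⟨⟨0, by omega⟩, Finset.mem_univ _⟩ x ≤ z}).toReal = 1) := by
  obtain ⟨m, rfl⟩ : ∃ m, n = m + 1 := ⟨n - 1, by omega⟩
  have hm : 1 ≤ m := by omega
  refine ⟨fun r => ?_, fun z hz => ?_, fun z hz0 hz1 => ?_, fun z hz => ?_⟩
  · refine (moment hm _ r).trans ?_
    rw [show ((m+1 : ℕ) : ℝ) - 1 = (m:ℝ) by push_cast; ring,
      show ((m+1 : ℕ) : ℝ) + (r:ℝ) - 1 = (m:ℝ) + (r:ℝ) by push_cast; ring]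
  · refine (congrArg ENNReal.toReal (cdf_ennreal hm _ z)).trans ?_
    rw [max_eq_right hz, min_eq_left zero_le_one, zero_pow (by omega), ENNReal.ofReal_zero]
    simp
  · refine (congrArg ENNReal.toReal (cdf_ennreal hm _ z)).trans ?_
    rw [max_eq_left hz0, min_eq_left hz1,
      ENNReal.toReal_ofReal (pow_nonneg hz0 m)]
    norm_num
  · refine (congrArg ENNReal.toReal (cdf_ennreal hm _ z)).trans ?_
    rw [min_eq_right (le_max_of_le_left hz), one_pow, ENNReal.ofReal_one]
    simp
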